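/- Let M and OPT be matchings in a bipartite graph whose vertices on one side (hospitals) have unit capacity. If the symmetric difference M ⊕ OPT contains no augmenting path of length 1 and no augmenting path of length 3 with respect to M, then |OPT| ≤ (3/2)·|M|. -/
import Mathlib


/-- An HRLQ instance: bipartite graph on residents `R` and hospitals `H` with
strict preferences encoded as rank functions (lower rank = more preferred)
and lower/upper quotas per hospital. -/
structure HRLQ (R H : Type) where
  E : R → H → Prop
  rPref : R → H → ℕ
  hPref : H → R → ℕ
  lq : H → ℕ
  uq : H → ℕ

namespace HRLQ

variable {R H : Type}

/-- residents matched to hospital `h` -/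
def matchedTo (M : R → Option H) (h : H) : Set R := {r | M r = some h}

/-- size of a matching -/
noncomputable def msize (M : R → Option H) : ℕ := {r | M r ≠ none}.ncard

variable (I : HRLQ R H)

/-- resident `r` strictly prefers hospital `h` to assignment `o`
    (being unmatched is least preferred); `h` must be acceptable to `r`. -/
def PrefersH (r : R) (h : H) (o : Option H) : Prop :=
  I.E r h ∧ ∀ h', o = some h' → I.rPref r h < I.rPref r h'

def IsMatching (M : R → Option H) : Prop :=
  (∀ r h, M r = some h → I.E r h) ∧ ∀ h, (matchedTo M h).ncard ≤ I.uq h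

def Feasible (M : R → Option H) : Prop :=
  ∀ h, I.lq h ≤ (matchedTo M h).ncard

def Blocks (M : R → Option H) (r : R) (h : H) : Prop :=
  I.E r h ∧ M r ≠ some h ∧ I.PrefersH r h (M r) ∧
    ((matchedTo M h).ncard < I.uq h ∨ ∃ r' ∈ matchedTo M h, I.hPref h r < I.hPref h r')

def Stable (M : R → Option H) : Prop := ∀ r h, ¬ I.Blocks M r h

def Envies (M : R → Option H) (r r' : R) : Prop :=
  ∃ h, M r' = some h ∧ I.PrefersH r h (M r) ∧ I.hPref h r < I.hPref h r'

def EnvyFree (M : R → Option H) : Prop := ∀ r r', ¬ I.Envies M r r'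

def RelaxedStable (M : R → Option H) : Prop :=
  (∀ h, {r | r ∈ matchedTo M h ∧ ∃ h', I.Blocks M r h'}.ncard ≤ I.lq h) ∧
  ∀ r, M r = none → ∀ h, ¬ I.Blocks M r h

/-- preferences are strict -/
def StrictPrefs : Prop :=
  (∀ r, Function.Injective (I.rPref r)) ∧ ∀ h, Function.Injective (I.hPref h)

end HRLQ

/-- If the symmetric difference of matchings M and OPT in a bipartite graph with
unit hospital capacities contains no augmenting path of length 1 or 3 w.r.t. M,
then |OPT| ≤ (3/2)·|M|. -/
theorem no_short_augmenting_paths_implies_three_halves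
    {R H : Type} [Fintype R] (M OPT : R → Option H)
    (hM : ∀ r r' h, M r = some h → M r' = some h → r = r')
    (hOPT : ∀ r r' h, OPT r = some h → OPT r' = some h → r = r')
    (h1 : ¬ ∃ r h, OPT r = some h ∧ M r = none ∧ ∀ r', M r' ≠ some h)
    (h3 : ¬ ∃ r₁ r₂ h₁ h₂, OPT r₁ = some h₁ ∧ M r₁ = none ∧ M r₂ = some h₁ ∧
            OPT r₂ = some h₂ ∧ ∀ r', M r' ≠ some h₂) :
    2 * HRLQ.msize OPT ≤ 3 * HRLQ.msize M := by
  classical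
  push_neg at h1 h3
  set A : Set R := {r | OPT r ≠ none} with hAdef
  set B : Set R := {r | M r ≠ none} with hBdef
  set X : Set R := {r | OPT r ≠ none ∧ M r = none} with hXdef
  -- f r : the M-partner of the hospital OPT r (for r ∈ X)
  set f : R → R := fun r => if hc : ∃ r', M r' = OPT r then hc.choose else r with hfdef
  have hf : ∀ r ∈ X, M (f r) = OPT r := by
    intro r hr
    obtain ⟨h, hh⟩ := Option.ne_none_iff_exists'.mp hr.1
    have hex : ∃ r', M r' = OPT r := by
      obtain ⟨r', hr'⟩ := h1 r h hh hr.2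
      exact ⟨r', by rw [hr', hh]⟩
    simp only [hfdef, dif_pos hex]
    exact hex.choose_spec
  set X0 : Set R := {r | r ∈ X ∧ OPT (f r) = none} with hX0def
  set X1 : Set R := {r | r ∈ X ∧ OPT (f r) ≠ none} with hX1def
  set g : R → R := fun r => if hc : ∃ r', M r' = OPT (f r) then hc.choose else r with hgdef
  have hg : ∀ r ∈ X1, M (g r) = OPT (f r) := by
    intro r hr
    obtain ⟨h1', hh1⟩ := Option.ne_none_iff_exists'.mp hr.1.1
    obtain ⟨h2', hh2⟩ := Option.ne_none_iff_exists'.mp hr.2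
    have hMf : M (f r) = some h1' := by rw [hf r hr.1, hh1]
    have hex : ∃ r', M r' = OPT (f r) := by
      obtain ⟨r', hr'⟩ := h3 r (f r) h1' h2' hh1 hr.1.2 hMf hh2
      exact ⟨r', by rw [hr', hh2]⟩
    simp only [hgdef, dif_pos hex]
    exact hex.choose_spec
  -- f maps X into B, injectively
  have hfB : ∀ r ∈ X, f r ∈ B := fun r hr => by
    simp only [hBdef, Set.mem_setOf_eq]; rw [hf r hr]; exact hr.1
  have hfinj : Set.InjOn f X := by
    intro r hr r' hr' heq
    obtain ⟨h, hh⟩ := Option.ne_none_iff_exists'.mp hr.1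
    have : OPT r' = some h := by
      rw [← hf r' hr', ← heq, hf r hr, hh]
    exact hOPT r r' h hh this
  have hgB : ∀ r ∈ X1, g r ∈ B := fun r hr => by
    simp only [hBdef, Set.mem_setOf_eq]; rw [hg r hr]; exact hr.2
  have hginj : Set.InjOn g X1 := by
    intro r hr r' hr' heq
    obtain ⟨h, hh⟩ := Option.ne_none_iff_exists'.mp hr.2
    have hff : OPT (f r') = some h := by
      rw [← hg r' hr', ← heq, hg r hr, hh]
    have : f r = f r' := hOPT (f r) (f r') h hh hff
    exact hfinj hr.1 hr'.1 this
  -- images disjoint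
  have hdisj : Disjoint (f '' X) (g '' X1) := by
    rw [Set.disjoint_left]
    rintro x ⟨r, hr, rfl⟩ ⟨r', hr', heq⟩
    -- g r' = f r, so M (g r') = M (f r), i.e. OPT (f r') = OPT r
    have h1' : M (g r') = OPT (f r') := hg r' hr'
    have h2' : M (f r) = OPT r := hf r hr
    rw [heq, h2'] at h1'
    obtain ⟨h, hh⟩ := Option.ne_none_iff_exists'.mp hr.1
    have : f r' = r := hOPT (f r') r h (by rw [← h1', hh]) hh
    have hMfr' : M (f r') = OPT r' := hf r' hr'.1
    rw [this, hr.2] at hMfr'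
    exact hr'.1.1 hMfr'.symm
  have key1 : X.ncard + X1.ncard ≤ B.ncard := by
    have h1' : (f '' X).ncard = X.ncard := Set.ncard_image_of_injOn hfinj
    have h2' : (g '' X1).ncard = X1.ncard := Set.ncard_image_of_injOn hginj
    have hu : (f '' X ∪ g '' X1).ncard = (f '' X).ncard + (g '' X1).ncard :=
      Set.ncard_union_eq hdisj (Set.toFinite _) (Set.toFinite _)
    have hsub : f '' X ∪ g '' X1 ⊆ B := by
      rintro x (⟨r, hr, rfl⟩ | ⟨r, hr, rfl⟩)
      · exact hfB r hr
      · exact hgB r hr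
    calc X.ncard + X1.ncard = (f '' X ∪ g '' X1).ncard := by rw [hu, h1', h2']
      _ ≤ B.ncard := Set.ncard_le_ncard hsub (Set.toFinite _)
  have key2 : X0.ncard ≤ (B \ A).ncard := by
    have hsub : f '' X0 ⊆ B \ A := by
      rintro x ⟨r, hr, rfl⟩
      refine ⟨hfB r hr.1, ?_⟩
      simp only [hAdef, Set.mem_setOf_eq, not_not]
      exact hr.2
    have : (f '' X0).ncard = X0.ncard :=
      Set.ncard_image_of_injOn (hfinj.mono (fun r hr => hr.1))
    rw [← this]
    exact Set.ncard_le_ncard hsub (Set.toFinite _)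
  -- partition identities
  have hXsplit : X.ncard = X0.ncard + X1.ncard := by
    have hu : X0 ∪ X1 = X := by
      ext r; simp only [hX0def, hX1def, Set.mem_union, Set.mem_setOf_eq]
      constructor
      · rintro (h | h) <;> exact h.1
      · intro h; by_cases hc : OPT (f r) = none
        · exact Or.inl ⟨h, hc⟩
        · exact Or.inr ⟨h, hc⟩
    have hd : Disjoint X0 X1 := by
      rw [Set.disjoint_left]
      rintro r ⟨_, h0⟩ ⟨_, h1'⟩
      exact h1' h0
    rw [← hu, Set.ncard_union_eq hd (Set.toFinite _) (Set.toFinite _)]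
  have hAsplit : A.ncard = (A ∩ B).ncard + X.ncard := by
    have hX_eq : X = A \ B := by
      ext r
      simp only [hXdef, hAdef, hBdef, Set.mem_setOf_eq, Set.mem_diff, not_not]
    rw [hX_eq]
    rw [← Set.ncard_inter_add_ncard_diff_eq_ncard A B (Set.toFinite _)]
  have hBsplit : B.ncard = (A ∩ B).ncard + (B \ A).ncard := by
    rw [Set.inter_comm]
    rw [← Set.ncard_inter_add_ncard_diff_eq_ncard B A (Set.toFinite _)]
  have hmO : HRLQ.msize OPT = A.ncard := rfl
  have hmM : HRLQ.msize M = B.ncard := rfl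
  rw [hmO, hmM]
  omega
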